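/- Let A be a Poisson H-simple H-comodule transposed Poisson algebra. Then B = A^{AcoH} is a field: every nonzero element of A^{AcoH} is invertible in A and its inverse lies in A^{AcoH}. -/
import Mathlib


open TensorProduct

/-- A transposed Poisson algebra structure on a commutative unital `k`-algebra `A`:
a Lie bracket satisfying the transposed Leibniz rule `2a{b,c} = {ab,c} + {b,ac}`. -/
structure TPA (k A : Type*) [Field k] [CharZero k] [CommRing A] [Algebra k A] where
  br : A →ₗ[k] A →ₗ[k] A
  skew : ∀ a b, br a b = - br b a
  jacobi : ∀ a b c, br a (br b c) = br (br a b) c + br b (br a c)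
  leibniz : ∀ a b c, 2 * a * br b c = br (a * b) c + br b (a * c)

/-- The transposed Poisson center `A^A = {b | b{a,a'} = {ba,a'} for all a,a'}`. -/
def TPA.center {k A : Type*} [Field k] [CharZero k] [CommRing A] [Algebra k A]
    (P : TPA k A) : Set A := {b | ∀ a a', b * P.br a a' = P.br (b * a) a'}

theorem poisson_H_simple_coinvariant_center_is_field {k A H : Type*} [Field k]
    [CharZero k] [CommRing A] [Algebra k A] [Nontrivial A] [Ring H]
    [HopfAlgebra k H] (P : TPA k A) (ρA : A →ₗ[k] A ⊗[k] H)
    -- `ρA` is a comodule structure map on `A`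
    (hAcoassoc : ∀ a : A,
      (TensorProduct.assoc k A H H) ((TensorProduct.map ρA LinearMap.id) (ρA a)) =
        (TensorProduct.map LinearMap.id (Coalgebra.comul (R := k))) (ρA a))
    (hAcounit : ∀ a : A,
      (TensorProduct.rid k A)
        ((TensorProduct.map LinearMap.id (Coalgebra.counit (R := k))) (ρA a)) = a)
    -- `A` is an `H`-comodule algebra
    (hAone : ρA 1 = 1) (hAmul : ∀ a b : A, ρA (a * b) = ρA a * ρA b)
    -- compatibility of the coaction with the bracket: `ρ({a,a'}) = {a₀,a'₀} ⊗ a₁a'₁`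
    (hAbr : ∀ a b : A, ρA (P.br a b) =
      TensorProduct.map₂ P.br (LinearMap.mul k H) (ρA a) (ρA b))
    -- `A` is Poisson `H`-simple: the only Poisson `H`-ideals are `0` and `A`
    (hsimple : ∀ I : Submodule k A,
      (∀ a : A, ∀ x ∈ I, a * x ∈ I) →
      (∀ a : A, ∀ x ∈ I, P.br a x ∈ I) →
      (∀ x ∈ I, ρA x ∈ LinearMap.range
        (TensorProduct.map I.subtype (LinearMap.id (R := k) (M := H)))) →
      I = ⊥ ∨ I = ⊤) :
    ∀ b : A, b ∈ P.center → ρA b = b ⊗ₜ[k] (1 : H) → b ≠ 0 →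
      ∃ c : A, c ∈ P.center ∧ ρA c = c ⊗ₜ[k] (1 : H) ∧ b * c = 1 := by
  intro b hb hρ hbne
  set I : Submodule k A := LinearMap.range (LinearMap.mulLeft k b) with hI
  have hbr : ∀ a y : A, P.br a (b * y) = b * P.br a y := by
    intro a y
    have h1 := P.leibniz b a y
    have h2 := hb a y
    linear_combination h2 - h1
  have hIsimp := hsimple I ?_ ?_ ?_
  · rcases hIsimp with h | h
    · exfalso
      have hbI : b ∈ I := ⟨1, mul_one b⟩
      rw [h] at hbI
      exact hbne (by simpa using hbI)
    · have h1I : (1 : A) ∈ I := h ▸ Submodule.mem_top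
      obtain ⟨c, hc⟩ := h1I
      simp only [LinearMap.mulLeft_apply] at hc
      refine ⟨c, ?_, ?_, hc⟩
      · intro a a'
        have e1 : b * P.br (c * a) a' = P.br a a' := by
          have := hb (c * a) a'
          rw [← mul_assoc, hc, one_mul] at this
          exact this
        linear_combination (P.br (c * a) a') * hc - c * e1
      · have h0 : ρA b * ρA c = 1 := by rw [← hAmul, hc, hAone]
        calc ρA c = (1 : A ⊗[k] H) * ρA c := (one_mul _).symm
          _ = ((c * b) ⊗ₜ[k] (1 : H)) * ρA c := by
              rw [mul_comm c b, hc, Algebra.TensorProduct.one_def]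
          _ = (c ⊗ₜ[k] (1 : H)) * ((b ⊗ₜ[k] (1 : H)) * ρA c) := by
              rw [← mul_assoc, Algebra.TensorProduct.tmul_mul_tmul, mul_one]
          _ = (c ⊗ₜ[k] (1 : H)) * 1 := by rw [← hρ, h0]
          _ = c ⊗ₜ[k] (1 : H) := mul_one _
  · rintro a x ⟨y, rfl⟩
    exact ⟨a * y, by simp [LinearMap.mulLeft_apply]; ring⟩
  · rintro a x ⟨y, rfl⟩
    exact ⟨P.br a y, by simp [LinearMap.mulLeft_apply, hbr]⟩
  · rintro x ⟨y, rfl⟩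
    let g : A →ₗ[k] I := (LinearMap.mulLeft k b).codRestrict I (fun z => ⟨z, rfl⟩)
    have key : ∀ t : A ⊗[k] H,
        (b ⊗ₜ[k] (1 : H)) * t = TensorProduct.map (LinearMap.mulLeft k b) LinearMap.id t := by
      intro t
      induction t using TensorProduct.induction_on with
      | zero => simp
      | tmul a h => simp [Algebra.TensorProduct.tmul_mul_tmul]
      | add u v hu hv => rw [mul_add, map_add, hu, hv]
    have hcomp : TensorProduct.map (LinearMap.mulLeft k b) (LinearMap.id (R := k) (M := H)) =
        (TensorProduct.map I.subtype LinearMap.id).comp (TensorProduct.map g LinearMap.id) := by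
      rw [← TensorProduct.map_comp]
      congr 1
    refine ⟨TensorProduct.map g LinearMap.id (ρA y), ?_⟩
    have : ρA (LinearMap.mulLeft k b y) = (b ⊗ₜ[k] (1 : H)) * ρA y := by
      simp only [LinearMap.mulLeft_apply]
      rw [hAmul, hρ]
    rw [this, key, hcomp]
    rfl
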